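/- Let V be a real vector space, let θ = ι(x) and σ = ι(y) in the exterior algebra Λ = ⋀(V), let χ > 0 be real, and set μ = (1/√(1+χ))·(θ + √χ·σ), ν = (1/√(1+χ))·(σ − √χ·θ). Apply the same transformation again with inverse cross-ratio χ' = 1/χ to the pair (μ, ν): μ' = (1/√(1+χ'))·(μ + √χ'·ν), ν' = (1/√(1+χ'))·(ν − √χ'·μ). Then μ' = σ and ν' = −θ. (Performing the flip twice returns the original odd invariants up to the single sign change prescribed by the spin-graph evolution of Figure 1.) -/

import Mathlib

open ExteriorAlgebra

/-- Performing the super Ptolemy flip twice (the second time with the inverse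
cross-ratio `χ' = 1/χ`) returns the original odd invariants up to the single
sign change prescribed by the spin-graph evolution: `μ' = σ` and `ν' = -θ`. -/
theorem superPtolemy_flip_twice
    {V : Type*} [AddCommGroup V] [Module ℝ V] (x y : V) (χ χ' : ℝ) (hχ : 0 < χ)
    (hχ' : χ' = 1 / χ)
    (θ σ μ ν μ' ν' : ExteriorAlgebra ℝ V)
    (hθ : θ = ι ℝ x) (hσ : σ = ι ℝ y)
    (hμ : μ = (Real.sqrt (1 + χ))⁻¹ • (θ + Real.sqrt χ • σ))
    (hν : ν = (Real.sqrt (1 + χ))⁻¹ • (σ - Real.sqrt χ • θ))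
    (hμ' : μ' = (Real.sqrt (1 + χ'))⁻¹ • (μ + Real.sqrt χ' • ν))
    (hν' : ν' = (Real.sqrt (1 + χ'))⁻¹ • (ν - Real.sqrt χ' • μ)) :
    μ' = σ ∧ ν' = -θ := by
  have hs : 0 < Real.sqrt χ := Real.sqrt_pos.mpr hχ
  have h1χ : 0 < 1 + χ := by linarith
  have ha : 0 < Real.sqrt (1 + χ) := Real.sqrt_pos.mpr h1χ
  have hs2 : Real.sqrt χ * Real.sqrt χ = χ := Real.mul_self_sqrt hχ.le
  have ha2 : Real.sqrt (1 + χ) * Real.sqrt (1 + χ) = 1 + χ :=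
    Real.mul_self_sqrt h1χ.le
  have h1 : Real.sqrt χ' = (Real.sqrt χ)⁻¹ := by
    rw [hχ', one_div, Real.sqrt_inv]
  have h2 : Real.sqrt (1 + χ') = Real.sqrt (1 + χ) / Real.sqrt χ := by
    rw [hχ']
    have h3 : 1 + 1 / χ = (1 + χ) / χ := by field_simp; ring
    rw [h3, Real.sqrt_div h1χ.le]
  subst hμ' hν' hμ hν hχ'
  rw [h1, h2]
  constructor <;>
  · match_scalars
    all_goals field_simp
    all_goals first
      | linear_combination (√χ*√(1+χ)) * hs2 - (√χ*√(1+χ)) * ha2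
      | linear_combination (√χ*√(1+χ)) * ha2 - (√χ*√(1+χ)) * hs2
      | linear_combination hs2 - ha2
      | linear_combination ha2 - hs2
      | ring
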